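/- ∫_0^1 x^{-1/2} (x² - 5x + 16) / (-48 - x(1-x)²) dx = -π√3 / 9. -/

import Mathlib

open Real

lemma g_integrable : IntervalIntegrable (fun x : ℝ => -(x ^ (-(1:ℝ)/2) / (x + 3)))
    MeasureTheory.volume 0 1 := by
  have hmaj : IntervalIntegrable (fun x : ℝ => x ^ (-(1:ℝ)/2)) MeasureTheory.volume 0 1 :=
    intervalIntegral.intervalIntegrable_rpow' (by norm_num)
  apply hmaj.mono_fun
  · apply (ContinuousOn.aestronglyMeasurable ?_ measurableSet_Ioc)
    rw [show ((0:ℝ) ⊓ 1) = 0 by norm_num, show ((0:ℝ) ⊔ 1) = 1 by norm_num]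
    apply ContinuousOn.neg
    apply ContinuousOn.div
    · exact fun x hx => (Real.continuousAt_rpow_const x _ (Or.inl (ne_of_gt hx.1))).continuousWithinAt
    · fun_prop
    · intro x hx; nlinarith [hx.1]
  · rw [Set.uIoc_of_le (by norm_num : (0:ℝ) ≤ 1)]
    filter_upwards [MeasureTheory.ae_restrict_mem measurableSet_Ioc] with x hx
    have hx0 : 0 < x := hx.1
    have h1 : (0:ℝ) ≤ x ^ (-(1:ℝ)/2) := Real.rpow_nonneg hx0.le _
    have h2 : (0:ℝ) < x + 3 := by linarith
    simp only [norm_neg, Real.norm_eq_abs, abs_div, abs_of_nonneg h1, abs_of_pos h2]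
    rw [div_le_iff₀ h2]
    nlinarith

theorem stmt4 :
    ∫ x in (0:ℝ)..1, x ^ (-(1 : ℝ) / 2) * (x ^ 2 - 5 * x + 16) / (-48 - x * (1 - x) ^ 2) =
      -π * Real.sqrt 3 / 9 := by
  have hs3 : (0:ℝ) < Real.sqrt 3 := Real.sqrt_pos.mpr (by norm_num)
  have hs3sq : Real.sqrt 3 * Real.sqrt 3 = 3 := Real.mul_self_sqrt (by norm_num)
  -- step 1: rewrite the integrand
  have hcongr : ∀ x ∈ Set.uIcc (0:ℝ) 1,
      x ^ (-(1 : ℝ) / 2) * (x ^ 2 - 5 * x + 16) / (-48 - x * (1 - x) ^ 2)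
        = -(x ^ (-(1:ℝ)/2) / (x + 3)) := by
    intro x hx
    rw [Set.uIcc_of_le (by norm_num : (0:ℝ) ≤ 1)] at hx
    rcases eq_or_lt_of_le hx.1 with h0 | h0
    · rw [← h0]
      rw [Real.zero_rpow (by norm_num)]
      norm_num
    · have hq : (0:ℝ) < x ^ 2 - 5 * x + 16 := by nlinarith [sq_nonneg (x - 5/2)]
      have h3 : (0:ℝ) < x + 3 := by linarith
      have hden : -48 - x * (1 - x) ^ 2 = -((x + 3) * (x ^ 2 - 5 * x + 16)) := by ring
      rw [hden]
      rw [div_neg, mul_comm (x + 3), ← div_div, mul_div_cancel_right₀ _ hq.ne']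
    -- step 2: FTC for the simplified integrand
  rw [intervalIntegral.integral_congr hcongr]
  have hftc : ∫ x in (0:ℝ)..1, -(x ^ (-(1:ℝ)/2) / (x + 3)) =
      (fun x : ℝ => -(2 / Real.sqrt 3 * Real.arctan (Real.sqrt x / Real.sqrt 3))) 1 -
      (fun x : ℝ => -(2 / Real.sqrt 3 * Real.arctan (Real.sqrt x / Real.sqrt 3))) 0 := by
    refine intervalIntegral.integral_eq_sub_of_hasDerivAt_of_le
      (f := fun x : ℝ => -(2 / Real.sqrt 3 * Real.arctan (Real.sqrt x / Real.sqrt 3)))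
      (f' := fun x : ℝ => -(x ^ (-(1:ℝ)/2) / (x + 3))) (by norm_num) ?_ ?_ g_integrable
    · exact (Continuous.neg (continuous_const.mul (Real.continuous_arctan.comp
        (Real.continuous_sqrt.div_const _)))).continuousOn
    · intro x hx
      have hx0 : 0 < x := hx.1
      have hsx : 0 < Real.sqrt x := Real.sqrt_pos.mpr hx0
      have hsq : Real.sqrt x * Real.sqrt x = x := Real.mul_self_sqrt hx0.le
      have hd1 : HasDerivAt (fun y : ℝ => Real.sqrt y / Real.sqrt 3)
          (1 / (2 * Real.sqrt x) / Real.sqrt 3) x :=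
        (Real.hasDerivAt_sqrt hx0.ne').div_const _
      have hd2 : HasDerivAt (fun y : ℝ => Real.arctan (Real.sqrt y / Real.sqrt 3))
          (1 / (1 + (Real.sqrt x / Real.sqrt 3) ^ 2) * (1 / (2 * Real.sqrt x) / Real.sqrt 3)) x :=
        (Real.hasDerivAt_arctan _).comp x hd1
      have hd3 := (hd2.const_mul (2 / Real.sqrt 3)).neg
      convert hd3 using 1
      show -(x ^ (-(1:ℝ)/2) / (x + 3)) = _
      have hxr : x ^ (-(1:ℝ)/2) = (Real.sqrt x)⁻¹ := by
        rw [show (-(1:ℝ)/2) = -(1/2:ℝ) by norm_num, Real.rpow_neg hx0.le, Real.sqrt_eq_rpow]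
      rw [hxr]
      have h3 : (0:ℝ) < x + 3 := by linarith
      field_simp
      linear_combination -hs3sq - hsq
      rfl
  rw [hftc]
  have harc : Real.arctan (1 / Real.sqrt 3) = π / 6 := by
    rw [show (1 / Real.sqrt 3 : ℝ) = Real.tan (π / 6) by
      rw [Real.tan_eq_sin_div_cos, Real.sin_pi_div_six, Real.cos_pi_div_six]
      field_simp]
    exact Real.arctan_tan (by linarith [Real.pi_pos]) (by linarith [Real.pi_pos])
  simp only [Real.sqrt_one, Real.sqrt_zero, zero_div, Real.arctan_zero, mul_zero, neg_zero,
    sub_zero, harc]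
  field_simp
  nlinarith [hs3sq, Real.pi_pos]
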